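/- arXiv:2512.04245 — 4 statements merged into one kernel-verified Lean document; each statement's English description precedes it below -/
import Mathlib

section
/- For integers N ≥ 1, M ≥ 1 and 0 ≤ K ≤ M, and for every real s ≥ 0, one has ∫₀ˢ σ^{K+N-1}/(1+σ)^{M+N+1} dσ = (1+s)^{-(M+N)} / A · Σ_{j=K+N}^{M+N} C(M+N, j) s^j, where A = (M-K+1) · C(M+N, K+N-1). -/
open MeasureTheory Finset
open scoped Nat


lemma key (a b : ℕ) (ha : 1 ≤ a) (hab : a ≤ b) (x : ℝ) :
    (1 + x) * ∑ j ∈ Finset.Icc a b, (Nat.choose b j : ℝ) * (j * x ^ (j - 1))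
      - b * ∑ j ∈ Finset.Icc a b, (Nat.choose b j : ℝ) * x ^ j
    = ((b : ℝ) - a + 1) * (Nat.choose b (a - 1)) * x ^ (a - 1) := by
  have hb : 1 ≤ b := ha.trans hab
  have hSA : ∑ j ∈ Finset.Icc a b, (Nat.choose b j : ℝ) * (j * x ^ (j - 1))
      = ∑ i ∈ Finset.Icc (a-1) (b-1), ((b : ℝ) - i) * (Nat.choose b i) * x ^ i := by
    rw [show Finset.Icc a b = (Finset.Icc (a-1) (b-1)).map (addRightEmbedding 1) by
      rw [Finset.map_add_right_Icc, Nat.sub_add_cancel ha, Nat.sub_add_cancel hb]]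
    rw [Finset.sum_map]
    refine Finset.sum_congr rfl fun i hi => ?_
    simp only [addRightEmbedding_apply, Nat.add_sub_cancel]
    have hib : i ≤ b := le_trans (Finset.mem_Icc.mp hi).2 (Nat.sub_le b 1)
    have h := Nat.choose_succ_right_eq b i
    have h' : ((b.choose (i+1)) : ℝ) * (i+1) = (b.choose i : ℝ) * ((b:ℝ) - i) := by
      have := congrArg (Nat.cast (R := ℝ)) h
      push_cast [Nat.cast_sub hib] at this
      linarith [this]
    push_cast
    linear_combination x ^ i * h'
  have h2 : x * ∑ j ∈ Finset.Icc a b, (Nat.choose b j : ℝ) * (j * x ^ (j - 1))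
      = ∑ j ∈ Finset.Icc a b, (Nat.choose b j : ℝ) * (j * x ^ j) := by
    rw [Finset.mul_sum]
    refine Finset.sum_congr rfl fun j hj => ?_
    have hj1 : 1 ≤ j := le_trans ha (Finset.mem_Icc.mp hj).1
    have hpx : x ^ (j-1) * x = x ^ j := by rw [← pow_succ, Nat.sub_add_cancel hj1]
    linear_combination (Nat.choose b j : ℝ) * j * hpx
  have h3 : ∑ j ∈ Finset.Icc a b, (Nat.choose b j : ℝ) * (j * x ^ j)
        - b * ∑ j ∈ Finset.Icc a b, (Nat.choose b j : ℝ) * x ^ j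
      = - ∑ j ∈ Finset.Icc a b, ((b:ℝ) - j) * (Nat.choose b j) * x ^ j := by
    rw [Finset.mul_sum, ← Finset.sum_sub_distrib, ← Finset.sum_neg_distrib]
    exact Finset.sum_congr rfl fun j hj => by ring
  have hins1 : Finset.Icc (a-1) (b-1) = insert (a-1) (Finset.Icc a (b-1)) := by
    rw [show Finset.Icc a (b-1) = Finset.Ioc (a-1) (b-1) by
      rw [← Finset.Icc_add_one_left_eq_Ioc]; congr 1; omega]
    rw [Finset.Ioc_insert_left (by omega)]
  have hins2 : Finset.Icc a b = insert b (Finset.Icc a (b-1)) := by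
    rw [show Finset.Icc a (b-1) = Finset.Ico a b by
      rw [← Finset.Ico_add_one_right_eq_Icc]; congr 1; omega]
    rw [Finset.Ico_insert_right hab]
  have h4 : ∑ i ∈ Finset.Icc (a-1) (b-1), ((b : ℝ) - i) * (Nat.choose b i) * x ^ i
      = ((b:ℝ) - ((a-1 : ℕ):ℝ)) * (Nat.choose b (a-1)) * x ^ (a-1)
        + ∑ i ∈ Finset.Icc a (b-1), ((b : ℝ) - i) * (Nat.choose b i) * x ^ i := by
    rw [hins1, Finset.sum_insert (by simp [Finset.mem_Icc]; omega)]
  have h5 : ∑ j ∈ Finset.Icc a b, ((b:ℝ) - j) * (Nat.choose b j) * x ^ j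
      = ∑ i ∈ Finset.Icc a (b-1), ((b : ℝ) - i) * (Nat.choose b i) * x ^ i := by
    rw [hins2, Finset.sum_insert (by simp [Finset.mem_Icc]; omega)]
    simp
  have hc : ((a-1 : ℕ):ℝ) = (a:ℝ) - 1 := by
    push_cast [Nat.cast_sub ha]; ring
  linear_combination hSA + h2 + h3 + h4 - h5 - (Nat.choose b (a-1) : ℝ) * x ^ (a-1) * hc


theorem stmt_0 (N M K : ℕ) (hN : 1 ≤ N) (hM : 1 ≤ M) (hK : K ≤ M) (s : ℝ) (hs : 0 ≤ s) :
    ∫ σ in (0:ℝ)..s, σ ^ (K + N - 1) / (1 + σ) ^ (M + N + 1)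
      = ((1 + s) ^ (M + N))⁻¹ / ((M - K + 1) * Nat.choose (M + N) (K + N - 1) : ℝ)
        * ∑ j ∈ Finset.Icc (K + N) (M + N), (Nat.choose (M + N) j : ℝ) * s ^ j := by
  set a := K + N with ha_def
  set b := M + N with hb_def
  have ha : 1 ≤ a := by omega
  have hab : a ≤ b := by omega
  have hb : 1 ≤ b := by omega
  set A : ℝ := ((M : ℝ) - K + 1) * Nat.choose b (a - 1) with hA_def
  have hAc : A = ((b : ℝ) - a + 1) * (Nat.choose b (a - 1)) := by
    rw [hA_def, ha_def, hb_def]; push_cast; ring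
  have hchoose_pos : 0 < (Nat.choose b (a-1) : ℝ) := by
    exact_mod_cast Nat.choose_pos (by omega)
  have hApos : 0 < A := by
    rw [hA_def]
    have : (0:ℝ) < (M : ℝ) - K + 1 := by
      have : (K:ℝ) ≤ M := by exact_mod_cast hK
      linarith
    positivity
  have hAne : A ≠ 0 := ne_of_gt hApos
  set F : ℝ → ℝ := fun x => ((1 + x) ^ b)⁻¹ / A * ∑ j ∈ Finset.Icc a b, (Nat.choose b j : ℝ) * x ^ j with hF_def
  have hderiv : ∀ σ ∈ Set.uIcc (0:ℝ) s, HasDerivAt F (σ ^ (a - 1) / (1 + σ) ^ (b + 1)) σ := by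
    intro σ hσ
    rw [Set.uIcc_of_le hs] at hσ
    have hσ0 : 0 ≤ σ := hσ.1
    have hu : (0:ℝ) < 1 + σ := by linarith
    have hune : (1 + σ) ≠ 0 := ne_of_gt hu
    have hpow : HasDerivAt (fun x : ℝ => (1 + x) ^ b) ((b : ℝ) * (1 + σ) ^ (b - 1) * 1) σ :=
      ((hasDerivAt_id σ).const_add 1).pow b
    have hg : HasDerivAt (fun x : ℝ => ((1 + x) ^ b)⁻¹)
        (-((b : ℝ) * (1 + σ) ^ (b - 1) * 1) / ((1 + σ) ^ b) ^ 2) σ :=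
      hpow.inv (by positivity)
    have hp : HasDerivAt (fun x : ℝ => ∑ j ∈ Finset.Icc a b, (Nat.choose b j : ℝ) * x ^ j)
        (∑ j ∈ Finset.Icc a b, (Nat.choose b j : ℝ) * ((j : ℝ) * σ ^ (j - 1))) σ := by
      apply HasDerivAt.fun_sum
      intro j hj
      exact (hasDerivAt_pow j σ).const_mul _
    have hFd : HasDerivAt F _ σ := ((hg.div_const A).mul hp)
    convert hFd using 1
    have hkey := key a b ha hab σ
    have hu1 : (1 + σ) ^ (b - 1) * (1 + σ) = (1 + σ) ^ b := by
      rw [← pow_succ, Nat.sub_add_cancel hb]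
    have hu2 : (1 + σ) ^ (b + 1) = (1 + σ) ^ b * (1 + σ) := by rw [pow_succ]
    set P := ∑ j ∈ Finset.Icc a b, (Nat.choose b j : ℝ) * σ ^ j with hP
    set Q := ∑ j ∈ Finset.Icc a b, (Nat.choose b j : ℝ) * ((j : ℝ) * σ ^ (j - 1)) with hQ
    have hkey' : (1 + σ) * Q - (b : ℝ) * P = A * σ ^ (a - 1) := by
      rw [hAc]; exact hkey
    rw [hu2]
    have hv : (1+σ)^(b-1) ≠ 0 := pow_ne_zero _ hune
    rw [← hu1]
    have hs' : σ ^ (a - 1) = ((1 + σ) * Q - (b : ℝ) * P) / A := by rw [hkey']; field_simp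
    rw [hs']
    field_simp
    ring
  have hint : IntervalIntegrable (fun σ : ℝ => σ ^ (a - 1) / (1 + σ) ^ (b + 1)) volume 0 s := by
    apply ContinuousOn.intervalIntegrable
    apply ContinuousOn.div (by fun_prop) (by fun_prop)
    intro x hx
    rw [Set.uIcc_of_le hs] at hx
    have : (0:ℝ) < 1 + x := by linarith [hx.1]
    positivity
  have hFTC := intervalIntegral.integral_eq_sub_of_hasDerivAt hderiv hint
  rw [hFTC]
  have hF0 : F 0 = 0 := by
    rw [hF_def]
    simp only
    rw [Finset.sum_eq_zero, mul_zero]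
    intro j hj
    have : j ≠ 0 := by have := (Finset.mem_Icc.mp hj).1; omega
    rw [zero_pow this, mul_zero]
  rw [hF0, sub_zero, hF_def]
end

section
/- Let Φ ∈ C²([0,1]) be convex and strictly convex somewhere on (a,1) for some a ∈ (0,1) (i.e., Φ'' ≥ 0 and Φ'' > 0 on a set of positive measure in (a,1)). With A_{M,N,k} = (M-k+1)·C(M+N,k+N-1), for each multi-index α with 2 ≤ |α| ≤ M the quantity b_α = N ∫₀^∞ Φ''((1+s)^{-M}) · c̃_α²/(1+s)^{2M+N+1} · [s^{|α|+N-1} - (M/A_{M,N,|α|}) Σ_{j=N}^{|α|+N-1} C(M+N,j) s^j] ds is strictly negative, where c̃_α² = A_{M,N,|α|}/A_{M,N,0}. -/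
open MeasureTheory Set Function

set_option maxHeartbeats 1600000

theorem stmt_13 (N M : ℕ) (hN : 1 ≤ N) (hM : 1 ≤ M) (α : Fin N → ℕ)
    (h2 : 2 ≤ ∑ i, α i) (hα : ∑ i, α i ≤ M)
    (a : ℝ) (ha : a ∈ Set.Ioo (0:ℝ) 1) (Φ : ℝ → ℝ)
    (hC2 : ContDiffOn ℝ 2 Φ (Set.Icc 0 1))
    (hconv : ∀ t ∈ Set.Icc (0:ℝ) 1, 0 ≤ deriv (deriv Φ) t)
    (hpos : 0 < volume {t : ℝ | t ∈ Set.Ioo a 1 ∧ 0 < deriv (deriv Φ) t}) :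
    (N : ℝ) * ∫ s in Set.Ioi (0:ℝ),
        deriv (deriv Φ) (((1 + s) ^ M)⁻¹)
          * ((((M - (∑ i, α i) + 1) * Nat.choose (M + N) ((∑ i, α i) + N - 1) : ℕ) : ℝ)
              / (((M + 1) * Nat.choose (M + N) (N - 1) : ℕ) : ℝ))
          / (1 + s) ^ (2 * M + N + 1)
          * (s ^ ((∑ i, α i) + N - 1)
              - (M : ℝ) / (((M - (∑ i, α i) + 1) * Nat.choose (M + N) ((∑ i, α i) + N - 1) : ℕ) : ℝ)
                * ∑ j ∈ Finset.Icc N ((∑ i, α i) + N - 1), (Nat.choose (M + N) j : ℝ) * s ^ j)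
      < 0 := by
  obtain ⟨ha0, ha1⟩ := ha
  set dd := deriv (deriv Φ) with hdd
  set k := ∑ i, α i with hk
  set e := k + N - 1 with he
  have heN : N ≤ e := by omega
  -- positivity of constants
  have hCpos : (0:ℝ) < (Nat.choose (M+N) e : ℝ) := by
    exact_mod_cast Nat.choose_pos (by omega)
  have hmpos : (0:ℝ) < ((M - k + 1 : ℕ) : ℝ) := by exact_mod_cast Nat.succ_pos _
  set A : ℝ := (((M - k + 1) * Nat.choose (M + N) e : ℕ) : ℝ) with hA
  set B : ℝ := (((M + 1) * Nat.choose (M + N) (N - 1) : ℕ) : ℝ) with hB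
  have hApos : (0:ℝ) < A := by
    rw [hA]
    exact_mod_cast Nat.mul_pos (Nat.succ_pos _) (Nat.choose_pos (by omega))
  have hBpos : (0:ℝ) < B := by
    rw [hB]; push_cast
    have : (0:ℝ) < (Nat.choose (M+N) (N-1) : ℝ) := by
      exact_mod_cast Nat.choose_pos (by omega)
    positivity
  set c : ℝ := A / B with hc
  have hcpos : 0 < c := div_pos hApos hBpos
  set P : ℝ → ℝ := fun s => s ^ e
      - (M:ℝ)/A * ∑ j ∈ Finset.Icc N e, (Nat.choose (M+N) j : ℝ) * s^j with hP
  set f : ℝ → ℝ := fun s => dd (((1+s)^M)⁻¹) * c / (1+s)^(2*M+N+1) * P s with hf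
  -- the ratio
  have hr1 : (1:ℝ) < (M:ℝ) / ((M - k + 1 : ℕ) : ℝ) := by
    rw [lt_div_iff₀ hmpos, one_mul]
    exact_mod_cast (by omega : M - k + 1 < M)
  have hC0 : (Nat.choose (M+N) e : ℝ) ≠ 0 := ne_of_gt hCpos
  have hm0 : ((M - k + 1 : ℕ) : ℝ) ≠ 0 := ne_of_gt hmpos
  have hratio : (M:ℝ)/A * ((Nat.choose (M+N) e : ℝ)) = (M:ℝ) / ((M - k + 1 : ℕ) : ℝ) := by
    rw [hA, Nat.cast_mul]
    field_simp
  -- P is nonpositive on [0,∞), negative on (0,∞)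
  have hPle : ∀ s : ℝ, 0 ≤ s → P s ≤ (1 - (M:ℝ)/((M - k + 1 : ℕ):ℝ)) * s ^ e := by
    intro s hs
    have hsum : (Nat.choose (M+N) e : ℝ) * s^e ≤
        ∑ j ∈ Finset.Icc N e, (Nat.choose (M+N) j : ℝ) * s^j := by
      refine Finset.single_le_sum (f := fun j => (Nat.choose (M+N) j : ℝ) * s^j)
        (fun j _ => by positivity) (Finset.mem_Icc.2 ⟨heN, le_refl e⟩)
    have h1 : (M:ℝ)/A * ((Nat.choose (M+N) e : ℝ) * s^e) ≤
        (M:ℝ)/A * ∑ j ∈ Finset.Icc N e, (Nat.choose (M+N) j : ℝ) * s^j :=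
      mul_le_mul_of_nonneg_left hsum (by positivity)
    have h2 : (M:ℝ)/A * ((Nat.choose (M+N) e : ℝ) * s^e)
        = ((M:ℝ) / ((M - k + 1 : ℕ):ℝ)) * s ^ e := by
      rw [← mul_assoc, hratio]
    rw [hP]
    simp only
    have h3 : (1 - (M:ℝ)/((M - k + 1 : ℕ):ℝ)) * s ^ e
        = s ^ e - ((M:ℝ)/((M - k + 1 : ℕ):ℝ)) * s ^ e := by ring
    rw [h3]
    linarith [h1, h2]
  have hPneg : ∀ s : ℝ, 0 < s → P s < 0 := by
    intro s hs
    have := hPle s hs.le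
    have hse : 0 < s ^ e := pow_pos hs e
    have h4 : (1 - (M:ℝ)/((M - k + 1 : ℕ):ℝ)) * s ^ e < 0 :=
      mul_neg_of_neg_of_pos (by linarith) hse
    exact lt_of_le_of_lt this h4
  have hPnonpos : ∀ s : ℝ, 0 ≤ s → P s ≤ 0 := by
    intro s hs
    have := hPle s hs
    have hse : 0 ≤ s ^ e := pow_nonneg hs e
    have h4 : (1 - (M:ℝ)/((M - k + 1 : ℕ):ℝ)) * s ^ e ≤ 0 :=
      mul_nonpos_iff.2 (Or.inr ⟨by linarith, hse⟩)
    exact le_trans this h4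
  -- the argument lies in (0,1] for s ≥ 0
  have harg : ∀ s : ℝ, 0 < s → (((1+s)^M)⁻¹) ∈ Set.Ioo (0:ℝ) 1 := by
    intro s hs
    have h1 : (1:ℝ) < (1+s)^M := one_lt_pow₀ (by linarith) (by omega)
    constructor
    · positivity
    · exact inv_lt_one_of_one_lt₀ h1
  -- pointwise sign of f
  have hfnonpos : ∀ s ∈ Set.Ioi (0:ℝ), f s ≤ 0 := by
    intro s hs
    have hs' : (0:ℝ) < s := hs
    have hu := harg s hs'
    have hd : 0 ≤ dd (((1+s)^M)⁻¹) := hconv _ ⟨hu.1.le, hu.2.le⟩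
    have hp : (0:ℝ) < (1+s)^(2*M+N+1) := by positivity
    have := hPnonpos s hs'.le
    rw [hf]
    simp only
    have h1 : 0 ≤ dd (((1+s)^M)⁻¹) * c / (1+s)^(2*M+N+1) := by positivity
    exact mul_nonpos_of_nonneg_of_nonpos h1 this
  have hfneg : ∀ s : ℝ, 0 < s → 0 < dd (((1+s)^M)⁻¹) → f s < 0 := by
    intro s hs hd
    have hp : (0:ℝ) < (1+s)^(2*M+N+1) := by positivity
    have hPn := hPneg s hs
    rw [hf]
    simp only
    have h1 : 0 < dd (((1+s)^M)⁻¹) * c / (1+s)^(2*M+N+1) := by positivity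
    exact mul_neg_of_pos_of_neg h1 hPn
  -- bound on dd on Ioo 0 1
  have hbound : ∃ C : ℝ, 0 ≤ C ∧ ∀ x ∈ Set.Ioo (0:ℝ) 1, |dd x| ≤ C := by
    have huniq : UniqueDiffOn ℝ (Set.Icc (0:ℝ) 1) := uniqueDiffOn_Icc one_pos
    have hcont : ContinuousOn (iteratedDerivWithin 2 Φ (Set.Icc (0:ℝ) 1)) (Set.Icc 0 1) :=
      hC2.continuousOn_iteratedDerivWithin (by norm_cast) huniq
    obtain ⟨C, hC⟩ := isCompact_Icc.exists_bound_of_continuousOn hcont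
    refine ⟨max C 0, le_max_right _ _, ?_⟩
    intro x hx
    have hxI : x ∈ Set.Icc (0:ℝ) 1 := ⟨hx.1.le, hx.2.le⟩
    have hnb : Set.Icc (0:ℝ) 1 ∈ nhds x := Icc_mem_nhds hx.1 hx.2
    have hset : Set.Icc (0:ℝ) 1 =ᶠ[nhds x] (Set.univ : Set ℝ) := by
      exact Filter.eventuallyEq_univ.mpr hnb
    have heq : iteratedDerivWithin 2 Φ (Set.Icc (0:ℝ) 1) x = dd x := by
      have h1 : iteratedDerivWithin 2 Φ (Set.Icc (0:ℝ) 1) x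
          = iteratedDerivWithin 2 Φ Set.univ x := by
        simp only [iteratedDerivWithin_eq_iteratedFDerivWithin]
        rw [iteratedFDerivWithin_congr_set hset]
      rw [h1, iteratedDerivWithin_univ, hdd]
      simp [iteratedDeriv_succ, iteratedDeriv_zero]
    have := hC x hxI
    rw [heq] at this
    calc |dd x| ≤ C := by simpa [Real.norm_eq_abs] using this
      _ ≤ max C 0 := le_max_left _ _
  obtain ⟨C, hCnn, hC⟩ := hbound
  set D : ℝ := 1 + (M:ℝ)/A * ∑ j ∈ Finset.Icc N e, (Nat.choose (M+N) j : ℝ) with hD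
  have hDnn : 0 ≤ D := by
    have : (0:ℝ) ≤ (M:ℝ)/A * ∑ j ∈ Finset.Icc N e, (Nat.choose (M+N) j : ℝ) := by positivity
    rw [hD]; linarith
  -- the key pointwise bound
  have key : ∀ s ∈ Set.Ioi (0:ℝ), ‖f s‖ ≤ (C * c * D) * (1 + s^2)⁻¹ := by
    intro s hs
    have hs' : (0:ℝ) < s := hs
    have h1s : (1:ℝ) ≤ 1 + s := by linarith
    have hu := harg s hs'
    have hdd_le : |dd (((1+s)^M)⁻¹)| ≤ C := hC _ hu
    have hpowpos : (0:ℝ) < (1+s)^(2*M+N+1) := by positivity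
    have hPabs : |P s| ≤ D * (1+s)^e := by
      have hsum_le : ∑ j ∈ Finset.Icc N e, (Nat.choose (M+N) j : ℝ) * s^j
          ≤ (∑ j ∈ Finset.Icc N e, (Nat.choose (M+N) j : ℝ)) * (1+s)^e := by
        rw [Finset.sum_mul]
        refine Finset.sum_le_sum fun j hj => ?_
        have hje : j ≤ e := (Finset.mem_Icc.1 hj).2
        have : s ^ j ≤ (1+s)^e :=
          le_trans (pow_le_pow_left₀ hs'.le (by linarith) j) (pow_le_pow_right₀ h1s hje)
        exact mul_le_mul_of_nonneg_left this (by positivity)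
      have hse : s ^ e ≤ (1+s)^e := pow_le_pow_left₀ hs'.le (by linarith) e
      have habs2 : |P s| ≤ s ^ e + (M:ℝ)/A * ∑ j ∈ Finset.Icc N e, (Nat.choose (M+N) j : ℝ) * s^j := by
        rw [hP]
        simp only
        rw [abs_sub_comm]
        refine le_trans (abs_sub _ _) ?_
        have e1 : |(M:ℝ)/A * ∑ j ∈ Finset.Icc N e, (Nat.choose (M+N) j : ℝ) * s^j|
            = (M:ℝ)/A * ∑ j ∈ Finset.Icc N e, (Nat.choose (M+N) j : ℝ) * s^j := by
          refine abs_of_nonneg ?_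
          have : (0:ℝ) ≤ ∑ j ∈ Finset.Icc N e, (Nat.choose (M+N) j : ℝ) * s^j :=
            Finset.sum_nonneg fun j _ => by positivity
          positivity
        have e2 : |s ^ e| = s ^ e := abs_of_nonneg (by positivity)
        rw [e1, e2]
        linarith
      have h3 : (M:ℝ)/A * (∑ j ∈ Finset.Icc N e, (Nat.choose (M+N) j : ℝ) * s^j)
          ≤ (M:ℝ)/A * ((∑ j ∈ Finset.Icc N e, (Nat.choose (M+N) j : ℝ)) * (1+s)^e) :=
        mul_le_mul_of_nonneg_left hsum_le (by positivity)
      rw [hD]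
      calc |P s| ≤ s ^ e + (M:ℝ)/A * ∑ j ∈ Finset.Icc N e, (Nat.choose (M+N) j : ℝ) * s^j := habs2
        _ ≤ (1+s)^e + (M:ℝ)/A * ((∑ j ∈ Finset.Icc N e, (Nat.choose (M+N) j : ℝ)) * (1+s)^e) := by
            linarith
        _ = (1 + (M:ℝ)/A * ∑ j ∈ Finset.Icc N e, (Nat.choose (M+N) j : ℝ)) * (1+s)^e := by ring
    have hfrac : (1+s)^e / (1+s)^(2*M+N+1) ≤ (1 + s^2)⁻¹ := by
      have hd : e + (2*M+N+1 - e) = 2*M+N+1 := by omega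
      have h2d : 2 ≤ 2*M+N+1 - e := by omega
      have hq : (1+s)^(2*M+N+1) = (1+s)^e * (1+s)^(2*M+N+1-e) := by
        rw [← pow_add, hd]
      rw [hq]
      have hppos : (0:ℝ) < (1+s)^e := by positivity
      rw [div_mul_eq_div_div, div_self (ne_of_gt hppos), one_div]
      refine inv_anti₀ (by positivity) ?_
      calc (1:ℝ) + s^2 ≤ (1+s)^2 := by nlinarith
        _ ≤ (1+s)^(2*M+N+1-e) := pow_le_pow_right₀ h1s h2d
    have habs : ‖f s‖ = |dd (((1+s)^M)⁻¹)| * c * |P s| / (1+s)^(2*M+N+1) := by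
      rw [hf]
      simp only [Real.norm_eq_abs]
      rw [abs_mul, abs_div, abs_mul, abs_of_pos hcpos, abs_of_pos hpowpos]
      ring
    rw [habs]
    have step1 : |dd (((1+s)^M)⁻¹)| * c * |P s| ≤ (C * c) * (D * (1+s)^e) := by
      refine mul_le_mul ?_ hPabs (abs_nonneg _) (by positivity)
      exact mul_le_mul_of_nonneg_right hdd_le hcpos.le
    calc |dd (((1+s)^M)⁻¹)| * c * |P s| / (1+s)^(2*M+N+1)
        ≤ ((C * c) * (D * (1+s)^e)) / (1+s)^(2*M+N+1) :=
          (div_le_div_iff_of_pos_right hpowpos).2 step1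
      _ = (C * c * D) * ((1+s)^e / (1+s)^(2*M+N+1)) := by ring
      _ ≤ (C * c * D) * (1 + s^2)⁻¹ :=
          mul_le_mul_of_nonneg_left hfrac (by positivity)
  -- integrability of f on Ioi 0
  have hfint : IntegrableOn f (Set.Ioi (0:ℝ)) := by
    have hdom : Integrable (fun s : ℝ => (C * c * D) * (1 + s^2)⁻¹) :=
      integrable_inv_one_add_sq.const_mul _
    have hmeas : AEStronglyMeasurable f (volume.restrict (Set.Ioi (0:ℝ))) := by
      have h1 : Measurable fun s : ℝ => dd (((1+s)^M)⁻¹) := by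
        refine (measurable_deriv _).comp ?_
        fun_prop
      have h2 : Measurable P := by
        rw [hP]; fun_prop
      have h3 : Measurable f := by
        rw [hf]
        fun_prop
      exact h3.aestronglyMeasurable
    refine Integrable.mono' hdom.restrict hmeas ?_
    filter_upwards [ae_restrict_mem measurableSet_Ioi] with s hs
    exact key s hs
  -- the set where f < 0 has positive measure
  have hsupp : 0 < volume.restrict (Set.Ioi (0:ℝ)) (Function.support fun s => -f s) := by
    set E := {t : ℝ | t ∈ Set.Ioo a 1 ∧ 0 < dd t} with hE
    set g : ℝ → ℝ := fun t => t ^ (-(1:ℝ)/M) - 1 with hg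
    have hMR : (0:ℝ) < M := by exact_mod_cast hM
    have hkey : ∀ t ∈ E, 0 < g t ∧ ((1 + g t) ^ M)⁻¹ = t := by
      intro t ht
      obtain ⟨⟨hta, ht1⟩, _⟩ := ht
      have ht0 : (0:ℝ) < t := lt_trans ha0 hta
      have hgt : 1 < t ^ (-(1:ℝ)/M) := by
        rw [Real.one_lt_rpow_iff_of_pos ht0]
        exact Or.inr ⟨ht1, div_neg_of_neg_of_pos (by norm_num) hMR⟩
      constructor
      · rw [hg]; simp only; linarith
      · rw [hg]
        simp only
        have h1g : 1 + (t ^ (-(1:ℝ)/M) - 1) = t ^ (-(1:ℝ)/M) := by ring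
        rw [h1g, ← Real.rpow_natCast (t ^ (-(1:ℝ)/M)) M, ← Real.rpow_mul ht0.le]
        have hexp : (-(1:ℝ)/M) * M = -1 := by field_simp
        rw [hexp, Real.rpow_neg_one, inv_inv]
    have hgE_sub : g '' E ⊆ (Function.support fun s => -f s) ∩ Set.Ioi 0 := by
      rintro s ⟨t, ht, rfl⟩
      obtain ⟨hgt0, hFt⟩ := hkey t ht
      have hfneg' : f (g t) < 0 := by
        refine hfneg (g t) hgt0 ?_
        rw [hFt]
        exact ht.2
      refine ⟨Function.mem_support.mpr (ne_of_gt (by linarith)), hgt0⟩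
    have hLip : LipschitzOnWith (M : NNReal) (fun s : ℝ => ((1+s)^M)⁻¹) (Set.Ici (0:ℝ)) := by
      refine (convex_Ici (0:ℝ)).lipschitzOnWith_of_nnnorm_hasDerivWithin_le
        (f' := fun s : ℝ => -((M:ℝ) * (1+s)^(M-1) * 1) / ((1+s)^M)^2)
        (fun x hx => ?_) (fun x hx => ?_)
      · have hx0 : (0:ℝ) ≤ x := hx
        have h1 : HasDerivAt (fun s : ℝ => (1+s)^M) ((M:ℝ) * (1+x)^(M-1) * 1) x :=
          (hasDerivAt_id' x |>.const_add 1).pow M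
        exact (h1.inv (by positivity)).hasDerivWithinAt
      · have hx0 : (0:ℝ) ≤ x := hx
        have h1s : (1:ℝ) ≤ 1 + x := by linarith
        rw [← NNReal.coe_le_coe, coe_nnnorm, Real.norm_eq_abs]
        push_cast
        have hden : (0:ℝ) < ((1+x)^M)^2 := by positivity
        rw [abs_div, abs_neg, abs_of_nonneg (by positivity : (0:ℝ) ≤ (M:ℝ)*(1+x)^(M-1)*1),
          abs_of_pos hden, div_le_iff₀ hden]
        have h1 : (1+x)^(M-1) ≤ ((1+x)^M)^2 := by
          rw [← pow_mul]
          exact pow_le_pow_right₀ h1s (by omega)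
        nlinarith [h1, hMR.le]
    have hgE_pos : 0 < volume (g '' E) := by
      by_contra hcon
      push_neg at hcon
      have hzero : volume (g '' E) = 0 := le_zero_iff.1 hcon
      have hLip' : LipschitzOnWith (M : NNReal) (fun s : ℝ => ((1+s)^M)⁻¹) (g '' E) :=
        hLip.mono (by rintro s ⟨t, ht, rfl⟩; exact (hkey t ht).1.le)
      have himg : (fun s : ℝ => ((1+s)^M)⁻¹) '' (g '' E) = E := by
        rw [Set.image_image]
        calc (fun t => ((1 + g t)^M)⁻¹) '' E
            = id '' E := Set.image_congr (fun t ht => (hkey t ht).2)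
          _ = E := Set.image_id E
      have hHaus := hLip'.hausdorffMeasure_image_le (d := 1) zero_le_one
      rw [himg, MeasureTheory.hausdorffMeasure_real, hzero, mul_zero] at hHaus
      exact absurd hHaus hpos.not_ge
    calc (0:ENNReal) < volume (g '' E) := hgE_pos
      _ ≤ volume ((Function.support fun s => -f s) ∩ Set.Ioi 0) := measure_mono hgE_sub
      _ = volume.restrict (Set.Ioi 0) (Function.support fun s => -f s) :=
          (Measure.restrict_apply' measurableSet_Ioi).symm
  -- conclude
  have hneg : (∫ s in Set.Ioi (0:ℝ), f s) < 0 := by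
    have h0 : 0 < ∫ s in Set.Ioi (0:ℝ), -f s := by
      refine (integral_pos_iff_support_of_nonneg_ae ?_ ?_).2 hsupp
      · filter_upwards [ae_restrict_mem measurableSet_Ioi] with s hs
        simpa using hfnonpos s hs
      · exact (hfint.neg)
    rw [integral_neg] at h0
    linarith
  have hNpos : (0:ℝ) < N := by exact_mod_cast hN
  calc (N : ℝ) * ∫ s in Set.Ioi (0:ℝ), f s < 0 := mul_neg_of_pos_of_neg hNpos hneg
end

section
/- For every s > 0, for multi-index length k with 2 ≤ k ≤ M, the polynomial expression s^{k+N-1} - (M/(M-k+1)) · (1/C(M+N,k+N-1)) · Σ_{j=N}^{k+N-1} C(M+N,j) s^j is strictly negative; in particular, the coefficient of the top monomial s^{k+N-1} in the bracketed polynomial is 1 - M/(M-k+1) < 0, and all other coefficients of the subtracted sum are positive. -/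
theorem stmt_14 (N M k : ℕ) (hN : 1 ≤ N) (hM : 1 ≤ M) (hk2 : 2 ≤ k) (hkM : k ≤ M)
    (s : ℝ) (hs : 0 < s) :
    s ^ (k + N - 1) - (M : ℝ) / ((M - k + 1 : ℕ) : ℝ) * (1 / (Nat.choose (M + N) (k + N - 1) : ℝ))
        * ∑ j ∈ Finset.Icc N (k + N - 1), (Nat.choose (M + N) j : ℝ) * s ^ j < 0
    ∧ 1 - (M : ℝ) / ((M - k + 1 : ℕ) : ℝ) < 0
    ∧ ∀ j ∈ Finset.Icc N (k + N - 1), 0 < (Nat.choose (M + N) j : ℝ) := by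
  have hd : (0:ℝ) < ((M - k + 1 : ℕ) : ℝ) := by
    have : 1 ≤ M - k + 1 := by omega
    exact_mod_cast Nat.lt_of_lt_of_le Nat.zero_lt_one this
  have hratio : 1 < (M : ℝ) / ((M - k + 1 : ℕ) : ℝ) := by
    rw [lt_div_iff₀ hd, one_mul]
    exact_mod_cast (by omega : M - k + 1 < M)
  have hA : 0 < ((Nat.choose (M + N) (k + N - 1)) : ℝ) := by
    exact_mod_cast Nat.choose_pos (by omega : k + N - 1 ≤ M + N)
  have hmem : k + N - 1 ∈ Finset.Icc N (k + N - 1) := by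
    simp [Finset.mem_Icc]; omega
  have hsum : ((Nat.choose (M + N) (k + N - 1)) : ℝ) * s ^ (k + N - 1) ≤
      ∑ j ∈ Finset.Icc N (k + N - 1), (Nat.choose (M + N) j : ℝ) * s ^ j := by
    refine Finset.single_le_sum (f := fun j => (Nat.choose (M + N) j : ℝ) * s ^ j) ?_ hmem
    intro i hi
    positivity
  have hsle : s ^ (k + N - 1) ≤
      (1 / ((Nat.choose (M + N) (k + N - 1)) : ℝ)) *
        ∑ j ∈ Finset.Icc N (k + N - 1), (Nat.choose (M + N) j : ℝ) * s ^ j := by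
    rw [one_div, inv_mul_eq_div, le_div_iff₀ hA]
    linarith [hsum]
  refine ⟨?_, by linarith, ?_⟩
  · have hpos : 0 < s ^ (k + N - 1) := by positivity
    have h2 : s ^ (k + N - 1) <
        (M : ℝ) / ((M - k + 1 : ℕ) : ℝ) *
          ((1 / ((Nat.choose (M + N) (k + N - 1)) : ℝ)) *
            ∑ j ∈ Finset.Icc N (k + N - 1), (Nat.choose (M + N) j : ℝ) * s ^ j) := by
      calc s ^ (k + N - 1) = 1 * s ^ (k + N - 1) := (one_mul _).symm
        _ < (M : ℝ) / ((M - k + 1 : ℕ) : ℝ) * s ^ (k + N - 1) :=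
            mul_lt_mul_of_pos_right hratio hpos
        _ ≤ _ := mul_le_mul_of_nonneg_left hsle (by linarith)
    rw [mul_assoc]
    linarith
  · intro j hj
    simp only [Finset.mem_Icc] at hj
    exact_mod_cast Nat.choose_pos (by omega : j ≤ M + N)
end

section
/- Let d = C(M+N,N) and let V ⊂ S^{2d-1} ⊂ ℂ^d be the set of coefficient vectors (in the orthonormal monomial basis e_α) of the normalized reproducing kernels e^{iθ}(1+z·conj(w))^M/(1+|w|²)^{M/2}, θ ∈ ℝ, w ∈ ℂ^N. Then at the point X₀ = (1,0,…,0) (coefficients of the constant polynomial 1), the tangent space to V consists exactly of vectors Y = (Y_α) with Re Y₀ = 0 and Y_α = 0 for all |α| ≥ 2, so V has real dimension 2N+1. -/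
open MeasureTheory
open Filter

def multiIndexSet (N M : ℕ) : Finset (Fin N → ℕ) :=
  (Fintype.piFinset fun _ : Fin N => Finset.range (M + 1)).filter fun α => ∑ i, α i ≤ M

noncomputable def multinom (N M : ℕ) (α : Fin N → ℕ) : ℝ :=
  (M.factorial : ℝ) / (((∏ i, (α i).factorial : ℕ) : ℝ) * ((M - ∑ i, α i).factorial : ℕ))

def kernelCoeffSet (N M : ℕ) :
    Set (EuclideanSpace ℂ (multiIndexSet N M)) :=
  {Xc | ∃ (θ : ℝ) (w : EuclideanSpace ℂ (Fin N)), ∀ a : multiIndexSet N M,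
    Xc a = Complex.exp (θ * Complex.I) * (Real.sqrt (multinom N M a) : ℂ)
      * (∏ i, (starRingEnd ℂ) (w i) ^ ((a : Fin N → ℕ) i))
      / ((((1 + ‖w‖ ^ 2) ^ ((M : ℝ) / 2)) : ℝ) : ℂ)}

lemma zero_mem_mis (N M : ℕ) : (0 : Fin N → ℕ) ∈ multiIndexSet N M := by
  simp [multiIndexSet]

lemma multinom_zero (N M : ℕ) : multinom N M 0 = 1 := by
  have : (M.factorial : ℝ) ≠ 0 := by positivity
  simp [multinom, this]

lemma sum_eq_one_ex {N : ℕ} (a : Fin N → ℕ) (h : ∑ i, a i = 1) :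
    ∃ j, a = Pi.single j 1 := by
  have h1 : ∃ j, a j ≠ 0 := by
    by_contra hc
    push_neg at hc
    simp [Finset.sum_eq_zero (fun i _ => hc i)] at h
  obtain ⟨j, hj⟩ := h1
  have hsplit : a j + ∑ i ∈ Finset.univ.erase j, a i = 1 := by
    rw [Finset.add_sum_erase _ _ (Finset.mem_univ j)]; exact h
  have haj : a j = 1 := by omega
  have hrest : ∑ i ∈ Finset.univ.erase j, a i = 0 := by omega
  refine ⟨j, funext fun i => ?_⟩
  by_cases hij : i = j
  · subst hij; simp [haj]
  · rw [Finset.sum_eq_zero_iff] at hrest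
    simp [Pi.single_apply, hij, hrest i (by simp [hij])]

lemma mem_mis_of_sum {N M : ℕ} (a : Fin N → ℕ) (h : ∑ i, a i ≤ M) :
    a ∈ multiIndexSet N M := by
  simp only [multiIndexSet, Finset.mem_filter, Fintype.mem_piFinset, Finset.mem_range]
  refine ⟨fun i => ?_, h⟩
  have : a i ≤ ∑ k, a k := Finset.single_le_sum (fun k _ => Nat.zero_le _) (Finset.mem_univ i)
  omega

lemma multinom_single (N M : ℕ) (hM : 1 ≤ M) (j : Fin N) :
    multinom N M (Pi.single j 1) = M := by
  have h1 : ∑ i, Pi.single j 1 i = 1 := by simp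
  have h2 : ∏ i, ((Pi.single j 1 : Fin N → ℕ) i).factorial = 1 := by
    apply Finset.prod_eq_one; intro i _
    rcases eq_or_ne i j with hij | hij <;> simp [Pi.single_apply, hij]
  rw [multinom, h1, h2]
  have hfac : M.factorial = M * (M - 1).factorial := (Nat.mul_factorial_pred (by omega)).symm
  rw [hfac]
  have : ((M-1).factorial : ℝ) ≠ 0 := by positivity
  push_cast
  field_simp


noncomputable def a0 (N M : ℕ) : multiIndexSet N M := ⟨0, zero_mem_mis N M⟩

lemma euclid_coord_le {n : Type*} [Fintype n] (w : EuclideanSpace ℂ n) (i : n) :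
    ‖w i‖ ≤ ‖w‖ := by
  rw [EuclideanSpace.norm_eq]
  have h1 : ‖w i‖ ^ 2 ≤ ∑ j, ‖w j‖ ^ 2 :=
    Finset.single_le_sum (f := fun j => ‖w j‖^2) (fun j _ => by positivity) (Finset.mem_univ i)
  calc ‖w i‖ = Real.sqrt (‖w i‖ ^ 2) := by rw [Real.sqrt_sq (norm_nonneg _)]
  _ ≤ _ := Real.sqrt_le_sqrt h1

section main
variable {N M : ℕ}

lemma denom_sq (M : ℕ) (s : ℝ) (hs : 0 ≤ s) :
    (((1 + s) ^ ((M : ℝ) / 2)) : ℝ) ^ 2 = (1 + s) ^ (M : ℝ) := by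
  rw [← Real.rpow_natCast ((1+s) ^ ((M:ℝ)/2)) 2, ← Real.rpow_mul (by linarith)]
  norm_num

lemma denom_one_le (M : ℕ) (s : ℝ) (hs : 0 ≤ s) :
    1 ≤ ((1 + s) ^ ((M : ℝ) / 2) : ℝ) :=
  Real.one_le_rpow (by linarith) (by positivity)

lemma coord_a0 {x : EuclideanSpace ℂ (multiIndexSet N M)}
    {θ : ℝ} {w : EuclideanSpace ℂ (Fin N)}
    (h : ∀ a : multiIndexSet N M,
      x a = Complex.exp (θ * Complex.I) * (Real.sqrt (multinom N M a) : ℂ)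
      * (∏ i, (starRingEnd ℂ) (w i) ^ ((a : Fin N → ℕ) i))
      / ((((1 + ‖w‖ ^ 2) ^ ((M : ℝ) / 2)) : ℝ) : ℂ)) :
    x (a0 N M) = Complex.exp (θ * Complex.I)
      / ((((1 + ‖w‖ ^ 2) ^ ((M : ℝ) / 2)) : ℝ) : ℂ) := by
  rw [h (a0 N M)]
  simp [a0, multinom_zero]

lemma normSq_a0 {x : EuclideanSpace ℂ (multiIndexSet N M)} (hx : x ∈ kernelCoeffSet N M) :
    ∃ s : ℝ, 0 ≤ s ∧ Complex.normSq (x (a0 N M)) = ((1 + s) ^ (M:ℝ))⁻¹ := by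
  obtain ⟨θ, w, h⟩ := hx
  refine ⟨‖w‖ ^ 2, by positivity, ?_⟩
  rw [coord_a0 h]
  rw [map_div₀, Complex.normSq_eq_norm_sq, Complex.norm_exp_ofReal_mul_I]
  rw [Complex.normSq_eq_norm_sq, Complex.norm_real, Real.norm_eq_abs]
  have h1 := denom_one_le M (‖w‖^2) (by positivity)
  rw [abs_of_nonneg (by linarith), denom_sq M _ (by positivity)]
  norm_num

lemma normSq_a0_le_one {x : EuclideanSpace ℂ (multiIndexSet N M)}
    (hx : x ∈ kernelCoeffSet N M) : Complex.normSq (x (a0 N M)) ≤ 1 := by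
  obtain ⟨s, hs, h⟩ := normSq_a0 hx
  rw [h]
  have : (1:ℝ) ≤ (1+s) ^ (M:ℝ) := Real.one_le_rpow (by linarith) (by positivity)
  rw [inv_le_one_iff₀]; right; exact this
end main

section bound
variable {N M : ℕ}

lemma key_bound (hM : 1 ≤ M) {x : EuclideanSpace ℂ (multiIndexSet N M)}
    (hx : x ∈ kernelCoeffSet N M) (a : multiIndexSet N M)
    (ha : 2 ≤ ∑ i, (a : Fin N → ℕ) i)
    (hsmall : 1 - Complex.normSq (x (a0 N M)) ≤ 1/2) :
    ‖x a‖ ≤ Real.sqrt (multinom N M a) * (2 * (1 - Complex.normSq (x (a0 N M)))) := by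
  obtain ⟨θ, w, h⟩ := hx
  set s : ℝ := ‖w‖ ^ 2 with hs_def
  have hs : 0 ≤ s := by positivity
  set u : ℝ := 1 - Complex.normSq (x (a0 N M)) with hu_def
  -- compute normSq at a0
  have hns : Complex.normSq (x (a0 N M)) = ((1 + s) ^ (M:ℝ))⁻¹ := by
    rw [coord_a0 h, map_div₀, Complex.normSq_eq_norm_sq, Complex.norm_exp_ofReal_mul_I,
      Complex.normSq_eq_norm_sq, Complex.norm_real, Real.norm_eq_abs]
    have h1 := denom_one_le M s hs
    rw [abs_of_nonneg (by linarith), denom_sq M s hs]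
    norm_num
  -- s/(1+s) ≤ u
  have hpow : (1 + s) ≤ (1 + s) ^ (M:ℝ) := by
    calc (1+s) = (1+s) ^ (1:ℝ) := (Real.rpow_one _).symm
    _ ≤ _ := Real.rpow_le_rpow_of_exponent_le (by linarith) (by exact_mod_cast hM)
  have hinv : ((1 + s) ^ (M:ℝ))⁻¹ ≤ (1 + s)⁻¹ := by
    apply inv_anti₀ (by linarith) hpow
  have hu_ge : s / (1 + s) ≤ u := by
    rw [hu_def, hns]
    have : 1 - (1+s)⁻¹ = s / (1+s) := by field_simp; ring
    linarith [this ▸ sub_le_sub_left hinv 1]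
  have hu_nonneg : 0 ≤ u := le_trans (by positivity) hu_ge
  -- s ≤ 2u
  have hsu : s ≤ 2 * u := by
    have h1 : s ≤ u * (1 + s) := by
      rw [div_le_iff₀ (by linarith)] at hu_ge; linarith
    nlinarith [hsmall]
  have hs1 : s ≤ 1 := by linarith [hsmall]
  -- norm of x a
  have hxa : ‖x a‖ = Real.sqrt (multinom N M a) * (∏ i, ‖w i‖ ^ ((a : Fin N → ℕ) i))
      / ((1 + s) ^ ((M:ℝ)/2)) := by
    rw [h a]
    rw [norm_div, norm_mul, norm_mul]
    have h1 := denom_one_le M s hs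
    simp only [Complex.norm_exp_ofReal_mul_I, Complex.norm_real, Real.norm_eq_abs]
    rw [abs_of_nonneg (Real.sqrt_nonneg _), abs_of_nonneg (by linarith)]
    congr 1
    · rw [one_mul]
      congr 1
      rw [norm_prod]
      congr 1
      funext i
      rw [norm_pow]
      simp
  have hprod : (∏ i, ‖w i‖ ^ ((a : Fin N → ℕ) i)) ≤ s := by
    have hw1 : ‖w‖ ≤ 1 := by
      nlinarith [norm_nonneg w]
    calc (∏ i, ‖w i‖ ^ ((a : Fin N → ℕ) i)) ≤ ∏ i, ‖w‖ ^ ((a : Fin N → ℕ) i) := by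
          apply Finset.prod_le_prod (fun i _ => by positivity)
          intro i _
          exact pow_le_pow_left₀ (norm_nonneg _) (euclid_coord_le w i) _
    _ = ‖w‖ ^ (∑ i, (a : Fin N → ℕ) i) := by rw [← Finset.prod_pow_eq_pow_sum]
    _ ≤ ‖w‖ ^ 2 := pow_le_pow_of_le_one (norm_nonneg _) hw1 ha
    _ = s := rfl
  rw [hxa]
  have hd := denom_one_le M s hs
  have hsqrtnn : 0 ≤ Real.sqrt (multinom N M a) := Real.sqrt_nonneg _
  calc Real.sqrt (multinom N M a) * (∏ i, ‖w i‖ ^ ((a : Fin N → ℕ) i)) / ((1 + s) ^ ((M:ℝ)/2))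
      ≤ Real.sqrt (multinom N M a) * (∏ i, ‖w i‖ ^ ((a : Fin N → ℕ) i)) / 1 := by
        apply div_le_div_of_nonneg_left (by positivity) one_pos hd
  _ = Real.sqrt (multinom N M a) * (∏ i, ‖w i‖ ^ ((a : Fin N → ℕ) i)) := by ring
  _ ≤ Real.sqrt (multinom N M a) * s := by
        apply mul_le_mul_of_nonneg_left hprod hsqrtnn
  _ ≤ _ := by apply mul_le_mul_of_nonneg_left (by linarith) hsqrtnn
end bound

section fwd
variable {ι : Type*} [Fintype ι] [DecidableEq ι]

noncomputable def projR (ι : Type*) [Fintype ι] [DecidableEq ι] (b : ι) :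
    EuclideanSpace ℂ ι →L[ℝ] ℂ :=
  (ContinuousLinearMap.proj b).comp
    (PiLp.continuousLinearEquiv 2 ℝ (fun _ : ι => ℂ)).toContinuousLinearMap

lemma projR_apply (b : ι) (x : EuclideanSpace ℂ ι) : projR ι b x = x b := rfl

lemma coord_hasDerivAt {γ : ℝ → EuclideanSpace ℂ ι} (hdiff : DifferentiableAt ℝ γ 0)
    (b : ι) : HasDerivAt (fun t => γ t b) ((deriv γ 0) b) 0 := by
  have h1 : HasDerivAt γ (deriv γ 0) 0 := hdiff.hasDerivAt
  have h2 := (projR ι b).hasFDerivAt.comp_hasDerivAt 0 h1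
  exact h2

end fwd

noncomputable def basePoint (N M : ℕ) : EuclideanSpace ℂ (multiIndexSet N M) :=
  WithLp.toLp 2 (fun a => if (a : Fin N → ℕ) = 0 then 1 else 0)

section forward
variable {N M : ℕ}

lemma forward (hM : 1 ≤ M) (γ : ℝ → EuclideanSpace ℂ (multiIndexSet N M))
    (h0 : γ 0 = basePoint N M) (hmem : ∀ t, γ t ∈ kernelCoeffSet N M)
    (hdiff : DifferentiableAt ℝ γ 0) :
    (∀ a : multiIndexSet N M, (a : Fin N → ℕ) = 0 → ((deriv γ 0) a).re = 0)
      ∧ ∀ a : multiIndexSet N M, 2 ≤ ∑ i, (a : Fin N → ℕ) i → (deriv γ 0) a = 0 := by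
  set f : ℝ → ℂ := fun t => γ t (a0 N M) with hf_def
  have hf : HasDerivAt f ((deriv γ 0) (a0 N M)) 0 := coord_hasDerivAt hdiff _
  have hf0 : f 0 = 1 := by
    rw [hf_def]; simp only [h0, basePoint]; simp [a0]
  -- the function u
  set u : ℝ → ℝ := fun t => 1 - Complex.normSq (f t) with hu_def
  have hu0 : u 0 = 0 := by simp [hu_def, hf0]
  have hu_nonneg : ∀ t, 0 ≤ u t := fun t => by
    have := normSq_a0_le_one (hmem t); simp only [hu_def]; linarith
  have hu_diff : DifferentiableAt ℝ u 0 := by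
    have h1 : DifferentiableAt ℝ f 0 := hf.differentiableAt
    have hre : DifferentiableAt ℝ (fun t => (f t).re) 0 :=
      (Complex.reCLM.differentiableAt.comp 0 h1)
    have him : DifferentiableAt ℝ (fun t => (f t).im) 0 :=
      (Complex.imCLM.differentiableAt.comp 0 h1)
    have : u = fun t => 1 - ((f t).re * (f t).re + (f t).im * (f t).im) := by
      funext t; simp [hu_def, Complex.normSq_apply]
    rw [this]
    exact (differentiableAt_const _).sub ((hre.mul hre).add (him.mul him))
  have hu_deriv : deriv u 0 = 0 := by
    apply IsLocalMin.deriv_eq_zero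
    exact Filter.Eventually.filter_mono le_rfl
      (Filter.Eventually.of_forall (fun t => by rw [hu0]; exact hu_nonneg t))
  have hu_hasDeriv : HasDerivAt u 0 0 := by
    have := hu_diff.hasDerivAt
    rwa [hu_deriv] at this
  constructor
  · -- Re part
    intro a hacoe
    have haeq : a = a0 N M := Subtype.ext hacoe
    subst haeq
    have hre : HasDerivAt (fun t => (f t).re) (((deriv γ 0) (a0 N M)).re) 0 :=
      Complex.reCLM.hasFDerivAt.comp_hasDerivAt 0 hf
    have hmax : IsLocalMax (fun t => (f t).re) 0 := by
      apply Filter.Eventually.of_forall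
      intro t
      have h1 : Complex.normSq (f t) ≤ 1 := normSq_a0_le_one (hmem t)
      have h2 : (f t).re ≤ ‖f t‖ := Complex.re_le_norm _
      have h3 : ‖f t‖ ≤ 1 := by
        rw [← Real.sqrt_one, Complex.norm_def]
        exact Real.sqrt_le_sqrt h1
      simp only [hf0]
      simp only [Complex.one_re]
      linarith
    have := hmax.deriv_eq_zero
    rwa [hre.deriv] at this
  · -- vanishing part
    intro a ha
    have hane : (a : Fin N → ℕ) ≠ 0 := by
      intro hc
      rw [hc] at ha
      simp at ha
    set g : ℝ → ℂ := fun t => γ t a with hg_def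
    have hg : HasDerivAt g ((deriv γ 0) a) 0 := coord_hasDerivAt hdiff _
    have hg0 : g 0 = 0 := by
      rw [hg_def]; simp only [h0, basePoint]; simp [hane]
    -- slope characterization
    have hslopeg : Tendsto (slope g 0) (nhdsWithin 0 {(0:ℝ)}ᶜ) (nhds ((deriv γ 0) a)) :=
      hasDerivAt_iff_tendsto_slope.mp hg
    have hslopeu : Tendsto (slope u 0) (nhdsWithin 0 {(0:ℝ)}ᶜ) (nhds 0) :=
      hasDerivAt_iff_tendsto_slope.mp hu_hasDeriv
    -- eventually u t ≤ 1/2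
    have hucont : Tendsto u (nhds 0) (nhds 0) := by
      have := hu_diff.continuousAt
      rwa [ContinuousAt, hu0] at this
    have hev : ∀ᶠ t in nhdsWithin 0 {(0:ℝ)}ᶜ, u t ≤ 1/2 := by
      apply Filter.Eventually.filter_mono nhdsWithin_le_nhds
      exact hucont.eventually_le_const (by norm_num)
    -- squeeze
    have hbound : ∀ᶠ t in nhdsWithin 0 {(0:ℝ)}ᶜ,
        ‖slope g 0 t‖ ≤ 2 * Real.sqrt (multinom N M a) * |slope u 0 t| := by
      filter_upwards [hev, self_mem_nhdsWithin] with t ht ht0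
      have ht0' : t ≠ 0 := ht0
      have hkey := key_bound hM (hmem t) a ha (by simpa [hu_def] using ht)
      have hgt : ‖g t‖ ≤ Real.sqrt (multinom N M a) * (2 * u t) := by
        simpa [hg_def, hu_def] using hkey
      have htpos : 0 < |t| := abs_pos.2 ht0'
      have e1 : ‖slope g 0 t‖ = ‖g t‖ / |t| := by
        rw [slope_def_module, hg0, sub_zero, sub_zero, norm_smul]
        simp [Real.norm_eq_abs, abs_inv, div_eq_inv_mul]
      have e2 : |slope u 0 t| = u t / |t| := by
        rw [slope_def_field, hu0, sub_zero, sub_zero, abs_div]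
        rw [abs_of_nonneg (hu_nonneg t)]
      rw [e1, e2, mul_div_assoc']
      rw [div_le_div_iff₀ htpos htpos]
      nlinarith [hgt, Real.sqrt_nonneg (multinom N M a), hu_nonneg t, htpos]
    have hlim0 : Tendsto (fun t => 2 * Real.sqrt (multinom N M a) * |slope u 0 t|)
        (nhdsWithin 0 {(0:ℝ)}ᶜ) (nhds 0) := by
      have h1 : Tendsto (fun t => |slope u 0 t|) (nhdsWithin 0 {(0:ℝ)}ᶜ) (nhds 0) := by
        have := hslopeu.abs
        simpa using this
      have := h1.const_mul (2 * Real.sqrt (multinom N M a))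
      simpa using this
    have hgz : Tendsto (slope g 0) (nhdsWithin 0 {(0:ℝ)}ᶜ) (nhds 0) :=
      squeeze_zero_norm' hbound hlim0
    exact tendsto_nhds_unique hslopeg hgz
end forward

section backward
variable {N M : ℕ}

noncomputable def curve (N M : ℕ) (c : ℝ) (v : EuclideanSpace ℂ (Fin N)) :
    ℝ → EuclideanSpace ℂ (multiIndexSet N M) :=
  fun t => WithLp.toLp 2 (fun a => Complex.exp (((t * c : ℝ) : ℂ) * Complex.I) * (Real.sqrt (multinom N M a) : ℂ)
      * (∏ i, (starRingEnd ℂ) ((t • v) i) ^ ((a : Fin N → ℕ) i))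
      / ((((1 + ‖t • v‖ ^ 2) ^ ((M : ℝ) / 2)) : ℝ) : ℂ))

lemma curve_mem (c : ℝ) (v : EuclideanSpace ℂ (Fin N)) (t : ℝ) :
    curve N M c v t ∈ kernelCoeffSet N M :=
  ⟨t * c, t • v, fun _ => rfl⟩

lemma curve_eq (c : ℝ) (v : EuclideanSpace ℂ (Fin N)) (t : ℝ) (a : multiIndexSet N M) :
    curve N M c v t a = Complex.exp (((t * c : ℝ) : ℂ) * Complex.I)
      * (Real.sqrt (multinom N M a) : ℂ)
      * ((t : ℂ) ^ (∑ i, (a : Fin N → ℕ) i) * ∏ i, (starRingEnd ℂ) (v i) ^ ((a : Fin N → ℕ) i))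
      / ((((1 + t ^ 2 * ‖v‖ ^ 2) ^ ((M : ℝ) / 2)) : ℝ) : ℂ) := by
  have h1 : ‖t • v‖ ^ 2 = t ^ 2 * ‖v‖ ^ 2 := by
    rw [norm_smul, Real.norm_eq_abs, mul_pow, sq_abs]
  have h2 : (∏ i, (starRingEnd ℂ) ((t • v) i) ^ ((a : Fin N → ℕ) i))
      = (t : ℂ) ^ (∑ i, (a : Fin N → ℕ) i) * ∏ i, (starRingEnd ℂ) (v i) ^ ((a : Fin N → ℕ) i) := by
    rw [← Finset.prod_pow_eq_pow_sum, ← Finset.prod_mul_distrib]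
    congr 1
    funext i
    rw [PiLp.smul_apply]
    rw [show (t • v i : ℂ) = (t : ℂ) * v i from Complex.real_smul]
    rw [map_mul, mul_pow]
    congr 2
    simp [Complex.conj_ofReal]
  rw [curve, PiLp.toLp_apply, h1, h2]

lemma curve_zero (c : ℝ) (v : EuclideanSpace ℂ (Fin N)) :
    curve N M c v 0 = basePoint N M := by
  refine PiLp.ext fun a => ?_
  rw [curve_eq]
  by_cases h : (a : Fin N → ℕ) = 0
  · have hsum : ∑ i, (a : Fin N → ℕ) i = 0 := by simp [h]
    have hm : multinom N M (a : Fin N → ℕ) = 1 := h ▸ multinom_zero N M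
    simp [basePoint, h, hsum, hm, multinom_zero]
  · have hsum : ∑ i, (a : Fin N → ℕ) i ≠ 0 := by
      intro hc
      apply h
      funext i
      exact Finset.sum_eq_zero_iff.mp hc i (Finset.mem_univ i)
    simp [basePoint, h, zero_pow hsum]
end backward

section bderiv
variable {N M : ℕ}

lemma curve_coord_hasDerivAt (c : ℝ) (v : EuclideanSpace ℂ (Fin N)) (a : multiIndexSet N M) :
    HasDerivAt (fun t => curve N M c v t a)
      ((c : ℂ) * Complex.I * (Real.sqrt (multinom N M a) : ℂ)
          * ((0:ℂ) ^ (∑ i, (a : Fin N → ℕ) i) * ∏ i, (starRingEnd ℂ) (v i) ^ ((a : Fin N → ℕ) i))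
        + (Real.sqrt (multinom N M a) : ℂ)
          * (((∑ i, (a : Fin N → ℕ) i : ℕ) : ℂ) * (0:ℂ) ^ ((∑ i, (a : Fin N → ℕ) i) - 1)
            * ∏ i, (starRingEnd ℂ) (v i) ^ ((a : Fin N → ℕ) i))) 0 := by
  set k : ℕ := ∑ i, (a : Fin N → ℕ) i with hk
  set C : ℂ := (Real.sqrt (multinom N M a) : ℂ) with hC
  set K : ℂ := ∏ i, (starRingEnd ℂ) (v i) ^ ((a : Fin N → ℕ) i) with hK
  set s : ℝ := ‖v‖ ^ 2 with hs
  -- the exponential factor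
  have h0 : HasDerivAt (fun t : ℝ => t * c) c 0 := by
    simpa using (hasDerivAt_id (0:ℝ)).mul_const c
  have h1 : HasDerivAt (fun t : ℝ => ((t * c : ℝ) : ℂ)) ((c : ℂ)) 0 :=
    Complex.ofRealCLM.hasFDerivAt.comp_hasDerivAt 0 h0
  have h2 : HasDerivAt (fun t : ℝ => ((t * c : ℝ) : ℂ) * Complex.I) ((c : ℂ) * Complex.I) 0 :=
    h1.mul_const Complex.I
  have hA : HasDerivAt (fun t : ℝ => Complex.exp (((t * c : ℝ) : ℂ) * Complex.I))
      ((c : ℂ) * Complex.I) 0 := by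
    have := h2.cexp
    simpa using this
  -- the power factor
  have hOf : HasDerivAt (fun t : ℝ => ((t : ℝ) : ℂ)) 1 0 := by
    exact Complex.ofRealCLM.hasDerivAt
  have hB : HasDerivAt (fun t : ℝ => ((t : ℝ) : ℂ) ^ k) ((k : ℂ) * (0:ℂ) ^ (k - 1)) 0 := by
    have := (hasDerivAt_pow k ((0:ℝ) : ℂ)).comp_ofReal
    simpa using this
  -- the denominator
  have hp : HasDerivAt (fun t : ℝ => 1 + t ^ 2 * s) 0 0 := by
    have h3 : HasDerivAt (fun t : ℝ => t ^ 2 * s) 0 0 := by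
      simpa using (hasDerivAt_pow 2 (0:ℝ)).mul_const s
    simpa using h3.const_add 1
  have hr : HasDerivAt (fun t : ℝ => (1 + t ^ 2 * s) ^ ((M : ℝ)/2)) 0 0 := by
    have := hp.rpow_const (p := (M : ℝ)/2) (by norm_num)
    simpa using this
  have hD : HasDerivAt (fun t : ℝ => (((1 + t ^ 2 * s) ^ ((M : ℝ)/2) : ℝ) : ℂ)) 0 0 :=  by
    have := hr.ofReal_comp
    simpa using this
  have hD0 : (((1 + (0:ℝ) ^ 2 * s) ^ ((M : ℝ)/2) : ℝ) : ℂ) = 1 := by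
    norm_num
  -- assemble
  have hNum : HasDerivAt (fun t : ℝ =>
      Complex.exp (((t * c : ℝ) : ℂ) * Complex.I) * C * (((t : ℝ) : ℂ) ^ k * K))
      ((c : ℂ) * Complex.I * C * ((0:ℂ) ^ k * K) + C * ((k : ℂ) * (0:ℂ) ^ (k - 1) * K)) 0 := by
    have := (hA.mul_const C).mul (hB.mul_const K)
    convert this using 1
    · rfl
    · rfl
    simp
  have hdiv := hNum.div hD (by rw [hD0]; norm_num)
  convert hdiv using 1
  · rfl
  · funext t
    rw [curve_eq]
    rfl
  · rw [hD0]
    simp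

end bderiv

section bwd2
variable {N M : ℕ}

lemma single_mem_mis (hM : 1 ≤ M) (j : Fin N) :
    (Pi.single j 1 : Fin N → ℕ) ∈ multiIndexSet N M := by
  apply mem_mis_of_sum
  simpa using hM

lemma curve_deriv_val (hM : 1 ≤ M) (Y : EuclideanSpace ℂ (multiIndexSet N M))
    (h1 : ∀ a : multiIndexSet N M, (a : Fin N → ℕ) = 0 → (Y a).re = 0)
    (h2 : ∀ a : multiIndexSet N M, 2 ≤ ∑ i, (a : Fin N → ℕ) i → Y a = 0)
    (a : multiIndexSet N M) :
    ((Y (a0 N M)).im : ℂ) * Complex.I * (Real.sqrt (multinom N M a) : ℂ)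
          * ((0:ℂ) ^ (∑ i, (a : Fin N → ℕ) i)
            * ∏ i, (starRingEnd ℂ) ((starRingEnd ℂ) (Y ⟨Pi.single i 1, single_mem_mis hM i⟩)
                / ((Real.sqrt M : ℝ) : ℂ)) ^ ((a : Fin N → ℕ) i))
        + (Real.sqrt (multinom N M a) : ℂ)
          * (((∑ i, (a : Fin N → ℕ) i : ℕ) : ℂ) * (0:ℂ) ^ ((∑ i, (a : Fin N → ℕ) i) - 1)
            * ∏ i, (starRingEnd ℂ) ((starRingEnd ℂ) (Y ⟨Pi.single i 1, single_mem_mis hM i⟩)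
                / ((Real.sqrt M : ℝ) : ℂ)) ^ ((a : Fin N → ℕ) i))
      = Y a := by
  classical
  have hsqM : ((Real.sqrt M : ℝ) : ℂ) ≠ 0 := by
    have : (0:ℝ) < Real.sqrt M := Real.sqrt_pos.mpr (by exact_mod_cast hM)
    simp only [ne_eq, Complex.ofReal_eq_zero]
    linarith
  set k : ℕ := ∑ i, (a : Fin N → ℕ) i with hk
  rcases Nat.lt_or_ge k 2 with hk2 | hk2
  · interval_cases k
    · -- k = 0 : a = 0
      have ha0 : (a : Fin N → ℕ) = 0 := by
        funext i
        exact Finset.sum_eq_zero_iff.mp hk.symm i (Finset.mem_univ i)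
      have haeq : a = a0 N M := Subtype.ext ha0
      subst haeq
      have hC : Real.sqrt (multinom N M (a0 N M : Fin N → ℕ)) = 1 := by
        have : ((a0 N M : Fin N → ℕ)) = 0 := rfl
        rw [this, multinom_zero, Real.sqrt_one]
      have hprod : (∏ i, (starRingEnd ℂ) ((starRingEnd ℂ) (Y ⟨Pi.single i 1, single_mem_mis hM i⟩)
                / ((Real.sqrt M : ℝ) : ℂ)) ^ ((a0 N M : Fin N → ℕ) i)) = 1 := by
        apply Finset.prod_eq_one
        intro i _
        have : ((a0 N M : Fin N → ℕ)) i = 0 := rfl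
        rw [this, pow_zero]
      rw [hC, hprod]
      simp only [pow_zero, Nat.cast_zero, mul_one, one_mul, zero_mul, mul_zero, add_zero,
        Complex.ofReal_one]
      apply Complex.ext
      · simp [h1 (a0 N M) rfl]
      · simp
    · -- k = 1
      obtain ⟨j, hj⟩ := sum_eq_one_ex _ hk.symm
      have haeq : a = ⟨Pi.single j 1, single_mem_mis hM j⟩ := Subtype.ext hj
      have hC : Real.sqrt (multinom N M (a : Fin N → ℕ)) = Real.sqrt M := by
        rw [hj, multinom_single N M hM j]
      have hprod : (∏ i, (starRingEnd ℂ) ((starRingEnd ℂ) (Y ⟨Pi.single i 1, single_mem_mis hM i⟩)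
                / ((Real.sqrt M : ℝ) : ℂ)) ^ ((a : Fin N → ℕ) i))
          = Y ⟨Pi.single j 1, single_mem_mis hM j⟩ / ((Real.sqrt M : ℝ) : ℂ) := by
        rw [Finset.prod_eq_single j]
        · rw [hj]
          simp only [Pi.single_eq_same, pow_one, map_div₀]
          rw [Complex.conj_conj, Complex.conj_ofReal]
        · intro i _ hij
          rw [hj]
          simp [Pi.single_apply, hij]
        · intro h; exact absurd (Finset.mem_univ j) h
      rw [hC, hprod, haeq]
      field_simp
      simp
  · -- k ≥ 2
    have hY : Y a = 0 := h2 a hk2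
    have hz1 : (0:ℂ) ^ k = 0 := zero_pow (by omega)
    have hz2 : (0:ℂ) ^ (k - 1) = 0 := zero_pow (by omega)
    rw [hY, hz1, hz2]
    ring

lemma backward (hM : 1 ≤ M) (Y : EuclideanSpace ℂ (multiIndexSet N M))
    (h1 : ∀ a : multiIndexSet N M, (a : Fin N → ℕ) = 0 → (Y a).re = 0)
    (h2 : ∀ a : multiIndexSet N M, 2 ≤ ∑ i, (a : Fin N → ℕ) i → Y a = 0) :
    ∃ γ : ℝ → EuclideanSpace ℂ (multiIndexSet N M),
      γ 0 = basePoint N M ∧ (∀ t, γ t ∈ kernelCoeffSet N M)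
        ∧ DifferentiableAt ℝ γ 0 ∧ deriv γ 0 = Y := by
  classical
  set c : ℝ := (Y (a0 N M)).im with hc
  set v : EuclideanSpace ℂ (Fin N) :=
    WithLp.toLp 2 (fun i => (starRingEnd ℂ) (Y ⟨Pi.single i 1, single_mem_mis hM i⟩)
      / ((Real.sqrt M : ℝ) : ℂ)) with hv
  have key : ∀ b : multiIndexSet N M, HasDerivAt (fun t => curve N M c v t b) (Y b) 0 := by
    intro b
    have hval := curve_deriv_val hM Y h1 h2 b
    rw [← hval]
    exact curve_coord_hasDerivAt c v b
  have hpi : HasDerivAt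
      (fun t => (PiLp.continuousLinearEquiv 2 ℝ (fun _ : multiIndexSet N M => ℂ))
        (curve N M c v t))
      ((PiLp.continuousLinearEquiv 2 ℝ (fun _ : multiIndexSet N M => ℂ)) Y) 0 :=
    hasDerivAt_pi.mpr key
  have hfull : HasDerivAt (curve N M c v) Y 0 := by
    have h3 := ((PiLp.continuousLinearEquiv 2 ℝ
      (fun _ : multiIndexSet N M => ℂ)).symm.toContinuousLinearMap.hasFDerivAt).comp_hasDerivAt
      0 hpi
    exact h3
  exact ⟨curve N M c v, curve_zero c v, curve_mem c v, hfull.differentiableAt, hfull.deriv⟩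


end bwd2

section rankcount
variable (N M : ℕ)

noncomputable def tanSub : Submodule ℝ (EuclideanSpace ℂ (multiIndexSet N M)) where
  carrier := {Y | (∀ a : multiIndexSet N M, (a : Fin N → ℕ) = 0 → (Y a).re = 0)
          ∧ ∀ a : multiIndexSet N M, 2 ≤ ∑ i, (a : Fin N → ℕ) i → Y a = 0}
  add_mem' := by
    rintro Y Z ⟨hY1, hY2⟩ ⟨hZ1, hZ2⟩
    constructor
    · intro a ha
      have : ((Y + Z) a) = Y a + Z a := rfl
      rw [this, Complex.add_re, hY1 a ha, hZ1 a ha, add_zero]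
    · intro a ha
      have : ((Y + Z) a) = Y a + Z a := rfl
      rw [this, hY2 a ha, hZ2 a ha, add_zero]
  zero_mem' := by
    constructor
    · intro a _; rfl
    · intro a _; rfl
  smul_mem' := by
    rintro r Y ⟨hY1, hY2⟩
    constructor
    · intro a ha
      have : ((r • Y) a) = r • Y a := rfl
      rw [this]
      have : (r • Y a).re = r * (Y a).re := by
        rw [Complex.real_smul]; simp [Complex.mul_re]
      rw [this, hY1 a ha, mul_zero]
    · intro a ha
      have : ((r • Y) a) = r • Y a := rfl
      rw [this, hY2 a ha, smul_zero]

noncomputable def Lmap : EuclideanSpace ℂ (multiIndexSet N M) →ₗ[ℝ]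
    ℝ × ({b : multiIndexSet N M // 2 ≤ ∑ i, (b : Fin N → ℕ) i} → ℂ) where
  toFun Y := ((Y (a0 N M)).re, fun b => Y b.1)
  map_add' Y Z := by
    refine Prod.ext ?_ ?_
    · have : ((Y + Z) (a0 N M)) = Y (a0 N M) + Z (a0 N M) := rfl
      simp [this]
    · funext b
      rfl
  map_smul' r Y := by
    refine Prod.ext ?_ ?_
    · show ((r • Y) (a0 N M)).re = r • (Y (a0 N M)).re
      have h : ((r • Y) (a0 N M)) = r • Y (a0 N M) := rfl
      rw [h, Complex.real_smul, smul_eq_mul]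
      simp [Complex.mul_re]
    · funext b
      rfl

lemma ker_Lmap : LinearMap.ker (Lmap N M) = tanSub N M := by
  ext Y
  simp only [LinearMap.mem_ker, Lmap, LinearMap.coe_mk, AddHom.coe_mk, Prod.mk_eq_zero]
  constructor
  · rintro ⟨h1, h2⟩
    constructor
    · intro a ha
      have : a = a0 N M := Subtype.ext ha
      rw [this]; exact h1
    · intro a ha
      exact congrFun h2 ⟨a, ha⟩
  · rintro ⟨h1, h2⟩
    refine ⟨h1 (a0 N M) rfl, funext fun b => h2 b.1 b.2⟩

lemma Lmap_surj : Function.Surjective (Lmap N M) := by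
  classical
  rintro ⟨r, F⟩
  refine ⟨(WithLp.toLp 2 (fun a => if h : 2 ≤ ∑ i, (a : Fin N → ℕ) i then F ⟨a, h⟩
    else if (a : Fin N → ℕ) = 0 then (r : ℂ) else 0) :
    EuclideanSpace ℂ (multiIndexSet N M)), ?_⟩
  refine Prod.ext ?_ ?_
  · show (_ : ℂ).re = r
    have h1 : ¬ (2 ≤ ∑ i, ((a0 N M : Fin N → ℕ)) i) := by simp [a0]
    have h2 : ((a0 N M : Fin N → ℕ)) = 0 := rfl
    simp [h1, h2]
  · funext b
    show (if h : _ then F ⟨b.1, h⟩ else _) = F b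
    rw [dif_pos b.2]

lemma finrank_euclid : Module.finrank ℝ (EuclideanSpace ℂ (multiIndexSet N M))
    = 2 * (multiIndexSet N M).card := by
  rw [(PiLp.continuousLinearEquiv 2 ℝ
    (fun _ : multiIndexSet N M => ℂ)).toLinearEquiv.finrank_eq]
  rw [Module.finrank_pi_fintype]
  simp [Complex.finrank_real_complex, Finset.sum_const, Fintype.card_coe, mul_comm]

instance : FiniteDimensional ℝ (EuclideanSpace ℂ (multiIndexSet N M)) :=
  (PiLp.continuousLinearEquiv 2 ℝ
    (fun _ : multiIndexSet N M => ℂ)).toLinearEquiv.symm.finiteDimensional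

lemma card_bad : Fintype.card {b : multiIndexSet N M // 2 ≤ ∑ i, (b : Fin N → ℕ) i}
    = ((multiIndexSet N M).filter (fun x => 2 ≤ ∑ i, x i)).card := by
  classical
  rw [← Fintype.card_coe]
  apply Fintype.card_congr
  exact {
    toFun := fun b => ⟨b.1.1, Finset.mem_filter.mpr ⟨b.1.2, b.2⟩⟩
    invFun := fun x => ⟨⟨x.1, (Finset.mem_filter.mp x.2).1⟩, (Finset.mem_filter.mp x.2).2⟩
    left_inv := fun b => rfl
    right_inv := fun x => rfl }

lemma card_mis (hM : 1 ≤ M) (hN : 1 ≤ N) : (multiIndexSet N M).card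
    = 1 + N + ((multiIndexSet N M).filter (fun x => 2 ≤ ∑ i, x i)).card := by
  classical
  have hlow : (multiIndexSet N M).filter (fun x => ¬ 2 ≤ ∑ i, x i)
      = insert (0 : Fin N → ℕ) ((Finset.univ : Finset (Fin N)).image fun j => Pi.single j 1) := by
    ext x
    simp only [Finset.mem_filter, Finset.mem_insert, Finset.mem_image, Finset.mem_univ,
      true_and, not_le]
    constructor
    · rintro ⟨hmem, hlt⟩
      have hlt' : ∑ i, x i = 0 ∨ ∑ i, x i = 1 := by omega
      rcases hlt' with h0 | h1
      · left
        funext i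
        exact Finset.sum_eq_zero_iff.mp h0 i (Finset.mem_univ i)
      · right
        obtain ⟨j, hj⟩ := sum_eq_one_ex x h1
        exact ⟨j, hj.symm⟩
    · rintro (rfl | ⟨j, rfl⟩)
      · exact ⟨zero_mem_mis N M, by simp⟩
      · refine ⟨single_mem_mis hM j, by simp⟩
  have hnotin : (0 : Fin N → ℕ) ∉ (Finset.univ : Finset (Fin N)).image fun j => Pi.single j 1 := by
    simp only [Finset.mem_image, Finset.mem_univ, true_and, not_exists]
    intro j hj
    have := congrFun hj j
    simp at this
  have hinj : Function.Injective (fun j : Fin N => (Pi.single j 1 : Fin N → ℕ)) := by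
    intro j j' h
    have := congrFun h j
    simp only [Pi.single_eq_same] at this
    by_contra hne
    rw [Pi.single_apply] at this
    rw [if_neg hne] at this
    omega
  have hcard : ((multiIndexSet N M).filter (fun x => ¬ 2 ≤ ∑ i, x i)).card = 1 + N := by
    rw [hlow, Finset.card_insert_of_notMem hnotin, Finset.card_image_of_injective _ hinj]
    simp [add_comm]
  have hsplit := Finset.card_filter_add_card_filter_not
    (s := multiIndexSet N M) (fun x => 2 ≤ ∑ i, x i)
  rw [hcard] at hsplit
  linarith

lemma finrank_tanSub (hM : 1 ≤ M) (hN : 1 ≤ N) :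
    Module.finrank ℝ (tanSub N M) = 2 * N + 1 := by
  classical
  have hrn := LinearMap.finrank_range_add_finrank_ker (Lmap N M)
  rw [LinearMap.range_eq_top.mpr (Lmap_surj N M), finrank_top, ker_Lmap, finrank_euclid] at hrn
  have hcod : Module.finrank ℝ
      (ℝ × ({b : multiIndexSet N M // 2 ≤ ∑ i, (b : Fin N → ℕ) i} → ℂ))
      = 1 + 2 * ((multiIndexSet N M).filter (fun x => 2 ≤ ∑ i, x i)).card := by
    rw [Module.finrank_prod, Module.finrank_self, Module.finrank_pi_fintype]
    simp [Complex.finrank_real_complex, Finset.sum_const, card_bad, mul_comm]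
  rw [hcod] at hrn
  have := card_mis N M hM hN
  linarith
end rankcount

theorem stmt_17 (N M : ℕ) (hN : 1 ≤ N) (hM : 1 ≤ M) :
    letI T : Set (EuclideanSpace ℂ (multiIndexSet N M)) :=
      {Y | ∃ γ : ℝ → EuclideanSpace ℂ (multiIndexSet N M),
        γ 0 = basePoint N M ∧ (∀ t, γ t ∈ kernelCoeffSet N M)
          ∧ DifferentiableAt ℝ γ 0 ∧ deriv γ 0 = Y}
    T = {Y | (∀ a : multiIndexSet N M, (a : Fin N → ℕ) = 0 → (Y a).re = 0)
          ∧ ∀ a : multiIndexSet N M, 2 ≤ ∑ i, (a : Fin N → ℕ) i → Y a = 0}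
    ∧ Module.finrank ℝ (Submodule.span ℝ T) = 2 * N + 1 := by
  have hMain : {Y : EuclideanSpace ℂ (multiIndexSet N M) |
        ∃ γ : ℝ → EuclideanSpace ℂ (multiIndexSet N M),
        γ 0 = basePoint N M ∧ (∀ t, γ t ∈ kernelCoeffSet N M)
          ∧ DifferentiableAt ℝ γ 0 ∧ deriv γ 0 = Y}
      = {Y : EuclideanSpace ℂ (multiIndexSet N M) |
          (∀ a : multiIndexSet N M, (a : Fin N → ℕ) = 0 → (Y a).re = 0)
          ∧ ∀ a : multiIndexSet N M, 2 ≤ ∑ i, (a : Fin N → ℕ) i → Y a = 0} := by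
    ext Y
    constructor
    · rintro ⟨γ, h0, hmem, hdiff, hder⟩
      have h := forward hM γ h0 hmem hdiff
      rw [hder] at h
      exact h
    · rintro ⟨h1, h2⟩
      exact backward hM Y h1 h2
  have hsub : {Y : EuclideanSpace ℂ (multiIndexSet N M) |
          (∀ a : multiIndexSet N M, (a : Fin N → ℕ) = 0 → (Y a).re = 0)
          ∧ ∀ a : multiIndexSet N M, 2 ≤ ∑ i, (a : Fin N → ℕ) i → Y a = 0}
      = (tanSub N M : Set (EuclideanSpace ℂ (multiIndexSet N M))) := rfl
  refine ⟨hMain, ?_⟩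
  rw [hMain, hsub, Submodule.span_eq]
  exact finrank_tanSub N M hM hN
end
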